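/- Let d ≥ 1, let Ω ⊆ ℝ^d satisfy the d-Ahlfors condition, let δ ∈ (0,1), a₀ ∈ (0,1], C₁ > 0 and k ∈ ℕ, and let Δ be a countable collection of pairwise disjoint open subsets of Ω such that every R ∈ Δ has diam(R) ≤ C₁ δ^k and contains B(z_R, a₀ δ^k) ∩ Ω for some z_R ∈ Ω. Let t ∈ (δ^{k+1}, δ^k]. Then for every M > d+1 there exists c_M > 0, depending only on d, M, δ, a₀, C₁ and the d-Ahlfors constants of Ω, such that ∑_{R ∈ Δ} ⟨dist(x,R)/t⟩^{−M} ≤ c_M for every x ∈ ℝ^d. -/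

import Mathlib

open MeasureTheory Metric Set

/-- Summing the off-diagonal weights `⟨dist(x,R)/t⟩^{-M}` over all dyadic cubes `R` of step
size `t` gives a bound independent of `x` and `t`, provided `M > d + 1`. -/
theorem sum_offdiagonal_weights_bounded
    (d : ℕ) (hd : 1 ≤ d)
    (Ω : Set (EuclideanSpace ℝ (Fin d)))
    (c₁ c₂ : ℝ) (hc₁ : 0 < c₁) (hc₁₂ : c₁ ≤ c₂)
    (hAhlfors : ∀ x ∈ Ω, ∀ r : ℝ, 0 < r → r ≤ 1 →
      ENNReal.ofReal (c₁ * r ^ d) ≤ volume (Ω ∩ ball x r) ∧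
        volume (Ω ∩ ball x r) ≤ ENNReal.ofReal (c₂ * r ^ d))
    (δ a₀ C₁ : ℝ) (hδ0 : 0 < δ) (hδ1 : δ < 1) (ha₀0 : 0 < a₀) (ha₀1 : a₀ ≤ 1) (hC₁ : 0 < C₁)
    (M : ℝ) (hM : (d : ℝ) + 1 < M) :
    ∃ cM > 0, ∀ (k : ℕ) (Δ : Set (Set (EuclideanSpace ℝ (Fin d)))),
      Δ.Countable →
      (∀ R ∈ Δ, IsOpen R ∧ R ⊆ Ω) →
      (Δ.Pairwise Disjoint) →
      (∀ R ∈ Δ, EMetric.diam R ≤ ENNReal.ofReal (C₁ * δ ^ k)) →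
      (∀ R ∈ Δ, ∃ z ∈ Ω, ball z (a₀ * δ ^ k) ∩ Ω ⊆ R) →
      ∀ t : ℝ, δ ^ (k + 1) < t → t ≤ δ ^ k →
      ∀ x : EuclideanSpace ℝ (Fin d),
        ∑' R : Δ, (1 + EMetric.infEdist x (R : Set (EuclideanSpace ℝ (Fin d))) /
            ENNReal.ofReal t) ^ (-M) ≤ ENNReal.ofReal cM := by
  classical
  have hM0 : 0 ≤ M := by
    have : (0:ℝ) ≤ d := Nat.cast_nonneg d
    linarith
  -- the volume of the unit ball
  set W : ENNReal := volume (ball (0 : EuclideanSpace ℝ (Fin d)) 1) with hW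
  have hWtop : W ≠ ⊤ := measure_ball_lt_top.ne
  -- the geometric constant
  set β : ℝ := 1 + C₁ / δ with hβ
  have hβ0 : 0 < β := by positivity
  set Kc : ℝ := β ^ d / (c₁ * a₀ ^ d) with hKc
  have hKc0 : 0 < Kc := by positivity
  set K : ENNReal := ENNReal.ofReal Kc * W with hK
  have hKtop : K ≠ ⊤ := ENNReal.mul_ne_top ENNReal.ofReal_ne_top hWtop
  -- the series
  have hexp : (d : ℝ) - M < -1 := by linarith
  have hS : Summable (fun n : ℕ => ((n : ℝ) + 1) ^ ((d : ℝ) - M)) := by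
    have h := Real.summable_nat_rpow.mpr hexp
    exact ((summable_nat_add_iff 1).mpr h).congr (fun n => by push_cast; ring_nf)
  set S : ℝ := ∑' n : ℕ, ((n : ℝ) + 1) ^ ((d : ℝ) - M) with hSdef
  set B : ENNReal := K * ENNReal.ofReal S with hB
  have hBtop : B ≠ ⊤ := ENNReal.mul_ne_top hKtop ENNReal.ofReal_ne_top
  refine ⟨B.toReal + 1, by have := ENNReal.toReal_nonneg (a := B); linarith, ?_⟩
  intro k Δ hcount hopens hdisj hdiam hcontains t htl htu x
  -- basic facts on `t`, `δ ^ k`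
  have ht0 : 0 < t := lt_trans (pow_pos hδ0 _) htl
  have hδk0 : 0 < δ ^ k := pow_pos hδ0 _
  have hδk1 : δ ^ k ≤ 1 := pow_le_one₀ hδ0.le hδ1.le
  have hδkt : δ ^ k ≤ t / δ := by
    rw [le_div_iff₀ hδ0]
    calc δ ^ k * δ = δ ^ (k + 1) := by ring
    _ ≤ t := htl.le
  -- the inner radius
  set r : ℝ := a₀ * δ ^ k with hrdef
  have hr0 : 0 < r := by positivity
  have hr1 : r ≤ 1 := by
    calc r ≤ 1 * 1 := mul_le_mul ha₀1 hδk1 hδk0.le one_pos.le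
    _ = 1 := by ring
  have hrt : a₀ * t ≤ r := by
    have := mul_le_mul_of_nonneg_left htu ha₀0.le
    simpa [hrdef] using this
  -- choose the centers
  choose z hzΩ hzb using fun i : ↥Δ => hcontains i i.2
  have hne : ∀ i : ↥Δ, (i : Set (EuclideanSpace ℝ (Fin d))).Nonempty :=
    fun i => ⟨z i, hzb i ⟨mem_ball_self hr0, hzΩ i⟩⟩
  -- distances
  set D : ↥Δ → ENNReal := fun i => EMetric.infEdist x (i : Set (EuclideanSpace ℝ (Fin d)))
    with hD
  have hDtop : ∀ i, D i ≠ ⊤ := fun i => Metric.infEdist_ne_top (hne i)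
  set ri : ↥Δ → ℝ := fun i => (D i).toReal with hri
  have hri0 : ∀ i, 0 ≤ ri i := fun i => ENNReal.toReal_nonneg
  have hDeq : ∀ i, D i = ENNReal.ofReal (ri i) := fun i =>
    (ENNReal.ofReal_toReal (hDtop i)).symm
  set g : ↥Δ → ℕ := fun i => ⌊ri i / t⌋₊ with hg
  set f : ↥Δ → ENNReal := fun i => (1 + D i / ENNReal.ofReal t) ^ (-M) with hf
  -- pointwise bound on the fibers
  have hfiber_pt : ∀ n : ℕ, ∀ i : ↥Δ, g i = n → f i ≤ ((n : ENNReal) + 1) ^ (-M) := by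
    intro n i hgi
    have h1 : ((n : ENNReal) + 1) ≤ 1 + D i / ENNReal.ofReal t := by
      have hle : (n : ℝ) ≤ ri i / t := by
        rw [← hgi]
        exact Nat.floor_le (div_nonneg (hri0 i) ht0.le)
      have : (n : ENNReal) ≤ D i / ENNReal.ofReal t := by
        rw [hDeq i, ← ENNReal.ofReal_div_of_pos ht0, ← ENNReal.ofReal_natCast n]
        exact ENNReal.ofReal_le_ofReal hle
      calc (n : ENNReal) + 1 = 1 + (n : ENNReal) := by ring
      _ ≤ 1 + D i / ENNReal.ofReal t := by exact add_le_add le_rfl this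
    simp only [hf]
    rw [ENNReal.rpow_neg, ENNReal.rpow_neg]
    exact ENNReal.inv_le_inv.mpr (ENNReal.rpow_le_rpow h1 hM0)
  -- counting bound on the fibers
  have hcard : ∀ (n : ℕ) (F : Finset ↥Δ), (∀ i ∈ F, g i = n) →
      (F.card : ENNReal) ≤ ENNReal.ofReal (((n : ℝ) + 1) ^ d * Kc) * W := by
    intro n F hF
    set ρ : ℝ := ((n : ℝ) + 1) * t + C₁ * δ ^ k with hρ
    have hρ0 : 0 ≤ ρ := by positivity
    set ρ' : ℝ := ((n : ℝ) + 1) * t * β with hρ'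
    have hρρ' : ρ ≤ ρ' := by
      have h1 : C₁ * δ ^ k ≤ C₁ * (t / δ) :=
        mul_le_mul_of_nonneg_left hδkt hC₁.le
      have h2 : C₁ * (t / δ) ≤ ((n : ℝ) + 1) * (C₁ * (t / δ)) := by
        nlinarith [mul_pos hC₁ (div_pos ht0 hδ0), Nat.cast_nonneg (α := ℝ) n]
      have : ρ' = ((n : ℝ) + 1) * t + ((n : ℝ) + 1) * (C₁ * (t / δ)) := by
        rw [hρ', hβ]; field_simp
      rw [this, hρ]
      linarith
    -- each cube in the fiber lies in the ball of radius ρ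
    have hsub : ∀ i ∈ F, (i : Set (EuclideanSpace ℝ (Fin d))) ⊆ closedBall x ρ := by
      intro i hi y hy
      have hlt : ri i < ((n : ℝ) + 1) * t := by
        have h := Nat.lt_succ_floor (ri i / t)
        rw [show ⌊ri i / t⌋₊ = n from hF i hi] at h
        have := (div_lt_iff₀ ht0).mp (by exact_mod_cast h)
        push_cast at this
        linarith
      have hedist : edist y x ≤ ENNReal.ofReal ρ := by
        rw [edist_comm]
        calc edist x y ≤ D i + EMetric.diam (i : Set (EuclideanSpace ℝ (Fin d))) :=
          EMetric.edist_le_infEdist_add_ediam hy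
        _ ≤ ENNReal.ofReal (ri i) + ENNReal.ofReal (C₁ * δ ^ k) := by
          exact add_le_add (le_of_eq (hDeq i)) (hdiam i i.2)
        _ = ENNReal.ofReal (ri i + C₁ * δ ^ k) := by
          rw [ENNReal.ofReal_add (hri0 i) (by positivity)]
        _ ≤ ENNReal.ofReal ρ := ENNReal.ofReal_le_ofReal (by rw [hρ]; linarith)
      have : y ∈ EMetric.closedBall x (ENNReal.ofReal ρ) := hedist
      rw [← emetric_closedBall hρ0]; exact this
    -- lower volume bound for each cube
    have hlow : ∀ i : ↥Δ, ENNReal.ofReal (c₁ * r ^ d) ≤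
        volume (i : Set (EuclideanSpace ℝ (Fin d))) := by
      intro i
      refine le_trans (hAhlfors (z i) (hzΩ i) r hr0 hr1).1 (measure_mono ?_)
      rw [Set.inter_comm]
      exact hzb i
    -- the cubes are pairwise disjoint measurable sets
    have hpd : (↑F : Set ↥Δ).PairwiseDisjoint
        (fun i : ↥Δ => (i : Set (EuclideanSpace ℝ (Fin d)))) := by
      intro i _ j _ hij
      exact hdisj i.2 j.2 (fun h => hij (Subtype.coe_injective h))
    have hmeas : ∀ i ∈ F, MeasurableSet (i : Set (EuclideanSpace ℝ (Fin d))) :=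
      fun i _ => (hopens i i.2).1.measurableSet
    -- volume of the big ball
    have hball : volume (closedBall x ρ) = ENNReal.ofReal (ρ ^ d) * W := by
      rw [Measure.addHaar_closedBall volume x hρ0, finrank_euclideanSpace_fin]
    have hcount1 : (F.card : ENNReal) * ENNReal.ofReal (c₁ * r ^ d)
        ≤ ENNReal.ofReal (ρ' ^ d) * W := by
      calc (F.card : ENNReal) * ENNReal.ofReal (c₁ * r ^ d)
          = ∑ _i ∈ F, ENNReal.ofReal (c₁ * r ^ d) := by
            rw [Finset.sum_const, nsmul_eq_mul]
        _ ≤ ∑ i ∈ F, volume (i : Set (EuclideanSpace ℝ (Fin d))) :=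
            Finset.sum_le_sum (fun i _ => hlow i)
        _ = volume (⋃ i ∈ F, (i : Set (EuclideanSpace ℝ (Fin d)))) :=
            (measure_biUnion_finset hpd hmeas).symm
        _ ≤ volume (closedBall x ρ) := measure_mono (by
            intro y hy
            simp only [Set.mem_iUnion] at hy
            obtain ⟨i, hi, hyi⟩ := hy
            exact hsub i hi hyi)
        _ = ENNReal.ofReal (ρ ^ d) * W := hball
        _ ≤ ENNReal.ofReal (ρ' ^ d) * W := by
            exact mul_le_mul_left (ENNReal.ofReal_le_ofReal (pow_le_pow_left₀ hρ0 hρρ' d)) W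
    -- divide
    have hε0 : ENNReal.ofReal (c₁ * r ^ d) ≠ 0 := by
      simp only [ne_eq, ENNReal.ofReal_eq_zero, not_le]
      positivity
    have hεtop : ENNReal.ofReal (c₁ * r ^ d) ≠ ⊤ := ENNReal.ofReal_ne_top
    have h1 : (F.card : ENNReal) ≤ ENNReal.ofReal (ρ' ^ d) * W / ENNReal.ofReal (c₁ * r ^ d) :=
      (ENNReal.le_div_iff_mul_le (Or.inl hε0) (Or.inl hεtop)).mpr hcount1
    refine le_trans h1 ?_
    have hεε' : ENNReal.ofReal (c₁ * (a₀ * t) ^ d) ≤ ENNReal.ofReal (c₁ * r ^ d) := by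
      refine ENNReal.ofReal_le_ofReal ?_
      refine mul_le_mul_of_nonneg_left (pow_le_pow_left₀ (by positivity) hrt d) hc₁.le
    calc ENNReal.ofReal (ρ' ^ d) * W / ENNReal.ofReal (c₁ * r ^ d)
        ≤ ENNReal.ofReal (ρ' ^ d) * W / ENNReal.ofReal (c₁ * (a₀ * t) ^ d) :=
          ENNReal.div_le_div le_rfl hεε'
      _ = (ENNReal.ofReal (ρ' ^ d) / ENNReal.ofReal (c₁ * (a₀ * t) ^ d)) * W := by
          rw [div_eq_mul_inv, div_eq_mul_inv]; ring
      _ = ENNReal.ofReal (ρ' ^ d / (c₁ * (a₀ * t) ^ d)) * W := by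
          rw [ENNReal.ofReal_div_of_pos (by positivity)]
      _ = ENNReal.ofReal (((n : ℝ) + 1) ^ d * Kc) * W := by
          congr 2
          have ht' : t ≠ 0 := ht0.ne'
          have hc₁' : c₁ ≠ 0 := hc₁.ne'
          have ha₀' : a₀ ≠ 0 := ha₀0.ne'
          rw [hρ', hKc, mul_pow, mul_pow, mul_pow]
          field_simp
  -- per-fiber tsum bound
  have hfiber : ∀ n : ℕ, (∑' i : ↥Δ, if g i = n then f i else 0)
      ≤ K * ((n : ENNReal) + 1) ^ ((d : ℝ) - M) := by
    intro n
    rw [ENNReal.tsum_eq_iSup_sum]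
    refine iSup_le (fun F => ?_)
    set F' : Finset ↥Δ := F.filter (fun i => g i = n) with hF'
    have hFsum : ∑ i ∈ F, (if g i = n then f i else 0) = ∑ i ∈ F', f i :=
      (Finset.sum_filter (fun i => g i = n) f).symm
    rw [hFsum]
    have hstep : ∑ i ∈ F', f i ≤ (F'.card : ENNReal) * ((n : ENNReal) + 1) ^ (-M) := by
      have := Finset.sum_le_card_nsmul F' f (((n : ENNReal) + 1) ^ (-M))
        (fun i hi => hfiber_pt n i (by simpa [hF'] using (Finset.mem_filter.mp hi).2))
      simpa [nsmul_eq_mul] using this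
    refine le_trans hstep ?_
    have hcardF : (F'.card : ENNReal) ≤ ENNReal.ofReal (((n : ℝ) + 1) ^ d * Kc) * W :=
      hcard n F' (fun i hi => (Finset.mem_filter.mp hi).2)
    calc (F'.card : ENNReal) * ((n : ENNReal) + 1) ^ (-M)
        ≤ (ENNReal.ofReal (((n : ℝ) + 1) ^ d * Kc) * W) * ((n : ENNReal) + 1) ^ (-M) :=
          mul_le_mul_left hcardF _
      _ = K * ((n : ENNReal) + 1) ^ ((d : ℝ) - M) := by
          have hN : (ENNReal.ofReal ((n : ℝ) + 1)) = ((n : ENNReal) + 1) := by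
            rw [ENNReal.ofReal_add (Nat.cast_nonneg n) one_pos.le, ENNReal.ofReal_natCast,
              ENNReal.ofReal_one]
          have hNne0 : ((n : ENNReal) + 1) ≠ 0 := by simp
          have hNnetop : ((n : ENNReal) + 1) ≠ ⊤ := by
            simp [ENNReal.add_ne_top]
          rw [ENNReal.ofReal_mul (by positivity), ENNReal.ofReal_pow (by positivity), hN]
          rw [show (((n : ENNReal) + 1) ^ d) = ((n : ENNReal) + 1) ^ ((d : ℝ)) from
            (ENNReal.rpow_natCast _ d).symm]
          rw [show (d : ℝ) - M = (d : ℝ) + (-M) from sub_eq_add_neg _ _,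
            ENNReal.rpow_add _ _ hNne0 hNnetop, hK]
          ring
  -- assemble
  have hsplit : ∑' i : ↥Δ, f i = ∑' n : ℕ, ∑' i : ↥Δ, if g i = n then f i else 0 := by
    rw [ENNReal.tsum_comm]
    refine tsum_congr (fun i => ?_)
    have h := (tsum_eq_single (L := SummationFilter.unconditional ℕ) (f := fun n => if g i = n then f i else 0) (g i)
      (fun n hn => if_neg (Ne.symm hn)))
    simp only [eq_self_iff_true, if_true] at h
    exact h.symm
  have hmain : ∑' i : ↥Δ, f i ≤ B := by
    rw [hsplit]
    calc ∑' n : ℕ, ∑' i : ↥Δ, (if g i = n then f i else 0)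
        ≤ ∑' n : ℕ, K * ((n : ENNReal) + 1) ^ ((d : ℝ) - M) :=
          ENNReal.tsum_le_tsum hfiber
      _ = K * ∑' n : ℕ, ((n : ENNReal) + 1) ^ ((d : ℝ) - M) := ENNReal.tsum_mul_left
      _ ≤ K * ENNReal.ofReal S := by
          refine mul_le_mul_right (le_of_eq ?_) K
          rw [hSdef, ENNReal.ofReal_tsum_of_nonneg
            (fun n => Real.rpow_nonneg (by positivity) _) hS]
          refine tsum_congr (fun n => ?_)
          rw [← ENNReal.ofReal_rpow_of_pos (by positivity)]
          congr 1
          rw [ENNReal.ofReal_add (Nat.cast_nonneg n) one_pos.le, ENNReal.ofReal_natCast,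
            ENNReal.ofReal_one]
      _ = B := hB.symm
  refine le_trans hmain ?_
  calc B = ENNReal.ofReal B.toReal := (ENNReal.ofReal_toReal hBtop).symm
    _ ≤ ENNReal.ofReal (B.toReal + 1) := ENNReal.ofReal_le_ofReal (by linarith)
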